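/- For uniform X^{n+1} on {0,1}^{n+1}, G_s(X^{n+1}) ≥ ℓ_n · 2^s · G_s(X^n), where ℓ_n = (∑_{i=1}^{2^n}(i-1)^s)/(∑_{i=1}^{2^n} i^s); moreover ℓ_n ≥ 1 - (s+1)/2^n + O(2^{-n·min(1+s,2)}), and the infinite product ∏_{n≥1} ℓ_n^{-1} converges (is finite). -/

import Mathlib

open Finset Filter


/-- `ℓ_n = (∑_{i=1}^{2^n} (i-1)^s) / (∑_{i=1}^{2^n} i^s)`. -/
noncomputable def ellSeq (s : ℝ) (n : ℕ) : ℝ :=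
  (∑ i ∈ Finset.Icc (1 : ℕ) (2 ^ n), ((i : ℝ) - 1) ^ s) /
    (∑ i ∈ Finset.Icc (1 : ℕ) (2 ^ n), (i : ℝ) ^ s)

/-- The guessing moment `G_s(X^n)` of a uniform vector on `{0,1}^n`. -/
noncomputable def Gunif (s : ℝ) (n : ℕ) : ℝ :=
  (2 : ℝ) ^ (-(n : ℝ)) * ∑ i ∈ Finset.Icc (1 : ℕ) (2 ^ n), (i : ℝ) ^ s


lemma myIccSum (f : ℕ → ℝ) (M : ℕ) :
    ∑ i ∈ Icc 1 M, f i = ∑ k ∈ range M, f (k + 1) := by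
  rw [← Finset.Ico_add_one_right_eq_Icc, Finset.sum_Ico_eq_sum_range]
  simp [add_comm]

lemma myPair (f : ℕ → ℝ) (M : ℕ) :
    ∑ k ∈ range (2 * M), f k = ∑ j ∈ range M, (f (2 * j) + f (2 * j + 1)) := by
  induction M with
  | zero => simp
  | succ m ih =>
    rw [Nat.mul_succ, Finset.sum_range_succ, Finset.sum_range_succ, Finset.sum_range_succ, ih]
    ring

lemma myStep (s : ℝ) (hs : 0 < s) (a : ℝ) (ha : 0 ≤ a) :
    (a + 1) ^ (s + 1) - a ^ (s + 1) ≤ (s + 1) * (a + 1) ^ s := by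
  have h1 : (∫ x in a..(a+1), x ^ s) = ((a+1) ^ (s+1) - a ^ (s+1)) / (s+1) :=
    integral_rpow (Or.inl (by linarith))
  have h2 : (∫ x in a..(a+1), x ^ s) ≤ ∫ x in a..(a+1), (a+1) ^ s := by
    apply intervalIntegral.integral_mono_on (by linarith)
      (intervalIntegral.intervalIntegrable_rpow (Or.inl hs.le)) intervalIntegrable_const
    intro x hx
    exact Real.rpow_le_rpow (le_trans ha hx.1) hx.2 hs.le
  rw [h1, intervalIntegral.integral_const] at h2
  simp at h2
  rw [div_le_iff₀ (by linarith)] at h2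
  linarith [h2]

lemma myTelescope (s : ℝ) (hs : 0 < s) (M : ℕ) :
    ∑ i ∈ Icc 1 M, (((i : ℝ)) ^ s - ((i : ℝ) - 1) ^ s) = (M : ℝ) ^ s := by
  rw [myIccSum]
  have : ∀ k : ℕ, ((k + 1 : ℕ) : ℝ) ^ s - (((k + 1 : ℕ) : ℝ) - 1) ^ s
      = ((k + 1 : ℕ) : ℝ) ^ s - ((k : ℕ) : ℝ) ^ s := by intro k; push_cast; ring_nf
  rw [Finset.sum_congr rfl fun k _ => this k, Finset.sum_range_sub (fun k => ((k : ℕ) : ℝ) ^ s)]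
  simp [Real.zero_rpow hs.ne']

lemma mySumLB (s : ℝ) (hs : 0 < s) (M : ℕ) :
    (M : ℝ) ^ (s + 1) / (s + 1) ≤ ∑ i ∈ Icc 1 M, (i : ℝ) ^ s := by
  have key : ∀ i ∈ Icc 1 M,
      ((i : ℝ) ^ (s + 1) - ((i : ℝ) - 1) ^ (s + 1)) / (s + 1) ≤ (i : ℝ) ^ s := by
    intro i hi
    have hi1 : 1 ≤ i := (Finset.mem_Icc.mp hi).1
    have h0 : (0 : ℝ) ≤ (i : ℝ) - 1 := by
      have : (1 : ℝ) ≤ (i : ℝ) := by exact_mod_cast hi1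
      linarith
    have := myStep s hs ((i : ℝ) - 1) h0
    rw [div_le_iff₀ (by linarith)]
    have hi' : (i : ℝ) - 1 + 1 = (i : ℝ) := by ring
    rw [hi'] at this
    linarith
  calc (M : ℝ) ^ (s + 1) / (s + 1)
      = ∑ i ∈ Icc 1 M, ((i : ℝ) ^ (s + 1) - ((i : ℝ) - 1) ^ (s + 1)) / (s + 1) := by
        rw [← Finset.sum_div, myTelescope (s + 1) (by linarith) M]
    _ ≤ ∑ i ∈ Icc 1 M, (i : ℝ) ^ s := Finset.sum_le_sum key

lemma mySpos (s : ℝ) (M : ℕ) (hM : 1 ≤ M) : 0 < ∑ i ∈ Icc 1 M, (i : ℝ) ^ s := by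
  apply Finset.sum_pos
  · intro i hi
    have hi1 : 1 ≤ i := (Finset.mem_Icc.mp hi).1
    exact Real.rpow_pos_of_pos (by exact_mod_cast hi1) s
  · exact ⟨1, Finset.mem_Icc.mpr ⟨le_refl 1, hM⟩⟩

/-- `T = S - M^s`. -/
lemma myT (s : ℝ) (hs : 0 < s) (M : ℕ) :
    ∑ i ∈ Icc 1 M, ((i : ℝ) - 1) ^ s = (∑ i ∈ Icc 1 M, (i : ℝ) ^ s) - (M : ℝ) ^ s := by
  rw [← myTelescope s hs M, Finset.sum_sub_distrib]
  ring

/-- `T` as a sum up to `M - 1`. -/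
lemma myTalt (s : ℝ) (hs : 0 < s) (M : ℕ) (hM : 1 ≤ M) :
    ∑ i ∈ Icc 1 M, ((i : ℝ) - 1) ^ s = ∑ i ∈ Icc 1 (M - 1), (i : ℝ) ^ s := by
  rw [myIccSum, myIccSum]
  obtain ⟨m, rfl⟩ : ∃ m, M = m + 1 := ⟨M - 1, (Nat.succ_pred_eq_of_pos hM).symm⟩
  rw [Finset.sum_range_succ']
  simp [Real.zero_rpow hs.ne']

/-- `G_s(X^{n+1}) ≥ ℓ_n·2^s·G_s(X^n)`, the estimate
`ℓ_n ≥ 1 - (s+1)/2^n + O(2^{-n·min(1+s,2)})`, and convergence of `∏ ℓ_n⁻¹`. -/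
theorem ell_properties (s : ℝ) (hs : 0 < s) :
    (∀ n : ℕ, ellSeq s n * (2 : ℝ) ^ s * Gunif s n ≤ Gunif s (n + 1)) ∧
    (∃ C : ℝ, ∀ n : ℕ, 1 ≤ n →
      1 - (s + 1) / 2 ^ n - C / (2 : ℝ) ^ ((n : ℝ) * min (1 + s) 2) ≤ ellSeq s n) ∧
    (∃ L : ℝ, Tendsto (fun N : ℕ => ∏ n ∈ Finset.Icc 1 N, (ellSeq s n)⁻¹) atTop (nhds L)) := by
  have hMpow : ∀ n : ℕ, 1 ≤ 2 ^ n := fun n => Nat.one_le_two_pow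
  refine ⟨?_, ?_, ?_⟩
  · -- Part 1
    intro n
    set M := 2 ^ n with hMdef
    set S := ∑ i ∈ Icc 1 M, (i : ℝ) ^ s with hSdef
    set T := ∑ i ∈ Icc 1 M, ((i : ℝ) - 1) ^ s with hTdef
    set S' := ∑ i ∈ Icc (1 : ℕ) (2 ^ (n + 1)), (i : ℝ) ^ s with hS'def
    have hS : 0 < S := mySpos s M (hMpow n)
    have h2M : 2 ^ (n + 1) = 2 * M := by rw [pow_succ]; ring
    have key : 2 * ((2 : ℝ) ^ s * T) ≤ S' := by
      have hT : T = ∑ k ∈ range M, ((k : ℕ) : ℝ) ^ s := by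
        rw [hTdef, myIccSum]
        exact Finset.sum_congr rfl fun k _ => by push_cast; ring_nf
      have hS' : S' = ∑ j ∈ range M,
          (((2 * j + 1 : ℕ) : ℝ) ^ s + ((2 * j + 1 + 1 : ℕ) : ℝ) ^ s) := by
        rw [hS'def, h2M, myIccSum, myPair]
      rw [hT, hS', Finset.mul_sum, Finset.mul_sum]
      apply Finset.sum_le_sum
      intro j _
      have hj0 : (0 : ℝ) ≤ 2 * (j : ℝ) := by positivity
      have hmul : (2 : ℝ) ^ s * ((j : ℕ) : ℝ) ^ s = (2 * (j : ℝ)) ^ s :=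
        (Real.mul_rpow (by norm_num) (Nat.cast_nonneg j)).symm
      have h1 : (2 * (j : ℝ)) ^ s ≤ ((2 * j + 1 : ℕ) : ℝ) ^ s := by
        apply Real.rpow_le_rpow hj0 (by push_cast; linarith) hs.le
      have h2 : (2 * (j : ℝ)) ^ s ≤ ((2 * j + 1 + 1 : ℕ) : ℝ) ^ s := by
        apply Real.rpow_le_rpow hj0 (by push_cast; linarith) hs.le
      rw [hmul]
      linarith
    have hr : (0 : ℝ) < (2 : ℝ) ^ (-(n : ℝ)) := Real.rpow_pos_of_pos two_pos _
    have hrr : (2 : ℝ) ^ (-((n + 1 : ℕ) : ℝ)) = (2 : ℝ) ^ (-(n : ℝ)) * 2⁻¹ := by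
      push_cast
      rw [show -((n : ℝ) + 1) = -(n : ℝ) + (-1) by ring, Real.rpow_add two_pos,
        Real.rpow_neg_one]
    show ellSeq s n * (2 : ℝ) ^ s * Gunif s n ≤ Gunif s (n + 1)
    rw [ellSeq, Gunif, Gunif, hrr]
    rw [← hMdef, ← hSdef, ← hTdef, ← hS'def]
    have hL : T / S * 2 ^ s * ((2 : ℝ) ^ (-(n : ℝ)) * S)
        = (2 : ℝ) ^ (-(n : ℝ)) * ((2 : ℝ) ^ s * T) := by
      field_simp
    rw [hL]
    calc (2 : ℝ) ^ (-(n : ℝ)) * ((2 : ℝ) ^ s * T)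
        ≤ (2 : ℝ) ^ (-(n : ℝ)) * (2⁻¹ * S') := by
          apply mul_le_mul_of_nonneg_left _ hr.le
          linarith
      _ = (2 : ℝ) ^ (-(n : ℝ)) * 2⁻¹ * S' := by ring
  · -- Part 2
    refine ⟨0, fun n _ => ?_⟩
    rw [zero_div, sub_zero]
    set M := 2 ^ n with hMdef
    have hMr : ((M : ℕ) : ℝ) = (2 : ℝ) ^ n := by rw [hMdef]; push_cast; ring
    have hMrpos : (0 : ℝ) < ((M : ℕ) : ℝ) := by
      have := hMpow n; exact_mod_cast this
    set S := ∑ i ∈ Icc 1 M, (i : ℝ) ^ s with hSdef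
    have hS : 0 < S := mySpos s M (hMpow n)
    have hT := myT s hs M
    have hLB := mySumLB s hs M
    rw [ellSeq, ← hMdef, ← hSdef, hT]
    have hdivle : ((M : ℕ) : ℝ) ^ s / S ≤ (s + 1) / ((M : ℕ) : ℝ) := by
      rw [div_le_div_iff₀ hS hMrpos]
      have h1 : ((M : ℕ) : ℝ) ^ s * ((M : ℕ) : ℝ) = ((M : ℕ) : ℝ) ^ (s + 1) := by
        rw [Real.rpow_add hMrpos, Real.rpow_one]
      have h2 : ((M : ℕ) : ℝ) ^ (s + 1) ≤ (s + 1) * S := by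
        have := mul_le_mul_of_nonneg_left hLB (by linarith : (0 : ℝ) ≤ s + 1)
        rw [mul_div_cancel₀] at this
        · exact this
        · linarith
      linarith
    rw [sub_div, div_self hS.ne', ← hMr]
    linarith
  · -- Part 3
    set c : ℝ := (s + 1) * (2 : ℝ) ^ (s + 1) with hcdef
    have hc : 0 ≤ c := by
      apply mul_nonneg (by linarith)
      exact (Real.rpow_pos_of_pos two_pos _).le
    have hellpos : ∀ n : ℕ, 1 ≤ n → 0 < ellSeq s n := by
      intro n hn
      have hM : 2 ≤ 2 ^ n := by
        calc 2 = 2 ^ 1 := rfl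
        _ ≤ 2 ^ n := Nat.pow_le_pow_right (by norm_num) hn
      rw [ellSeq, myTalt s hs _ (hMpow n)]
      exact div_pos (mySpos s _ (by omega)) (mySpos s _ (hMpow n))
    have helle : ∀ n : ℕ, 1 ≤ n → ellSeq s n ≤ 1 := by
      intro n hn
      rw [ellSeq, div_le_one (mySpos s _ (hMpow n))]
      apply Finset.sum_le_sum
      intro i hi
      have hi1 : 1 ≤ i := (Finset.mem_Icc.mp hi).1
      have : (1 : ℝ) ≤ (i : ℝ) := by exact_mod_cast hi1
      exact Real.rpow_le_rpow (by linarith) (by linarith) hs.le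
    have hone : ∀ n : ℕ, 1 ≤ n → 1 ≤ (ellSeq s n)⁻¹ := by
      intro n hn
      rw [le_inv_comm₀ one_pos (hellpos n hn), inv_one]
      exact helle n hn
    have hfac : ∀ n : ℕ, 1 ≤ n → (ellSeq s n)⁻¹ ≤ 1 + c * (1 / 2 : ℝ) ^ n := by
      intro n hn
      set M := 2 ^ n with hMdef
      have hM2 : 2 ≤ M := by
        calc 2 = 2 ^ 1 := rfl
        _ ≤ 2 ^ n := Nat.pow_le_pow_right (by norm_num) hn
      have hMrpos : (0 : ℝ) < ((M : ℕ) : ℝ) := by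
        have := hMpow n; exact_mod_cast this
      have hMr2 : (2 : ℝ) ≤ ((M : ℕ) : ℝ) := by exact_mod_cast hM2
      set S := ∑ i ∈ Icc 1 M, (i : ℝ) ^ s with hSdef
      set T := ∑ i ∈ Icc 1 M, ((i : ℝ) - 1) ^ s with hTdef
      have hS : 0 < S := mySpos s M (hMpow n)
      have hTalt : T = ∑ i ∈ Icc 1 (M - 1), (i : ℝ) ^ s := myTalt s hs M (hMpow n)
      have hTpos : 0 < T := by
        rw [hTalt]; exact mySpos s _ (by omega)
      have hcast : ((M - 1 : ℕ) : ℝ) = ((M : ℕ) : ℝ) - 1 := by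
        rw [Nat.cast_sub (hMpow n), Nat.cast_one]
      have hTLB : (((M : ℕ) : ℝ) - 1) ^ (s + 1) / (s + 1) ≤ T := by
        rw [hTalt, ← hcast]
        exact mySumLB s hs (M - 1)
      have hST : S = T + ((M : ℕ) : ℝ) ^ s := by
        rw [hTdef, myT s hs M]; ring
      have hhalf : (1 / 2 : ℝ) ^ n = (((M : ℕ) : ℝ))⁻¹ := by
        rw [hMdef]
        push_cast
        rw [div_pow, one_pow, one_div]
        
      have hinv : (ellSeq s n)⁻¹ = S / T := by
        rw [ellSeq, ← hMdef, ← hSdef, ← hTdef, inv_div]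
      rw [hinv, hST, add_div, div_self hTpos.ne', hhalf]
      have h2pos : (0 : ℝ) < (2 : ℝ) ^ (s + 1) := Real.rpow_pos_of_pos two_pos _
      have e4 : (2 : ℝ) ^ (s + 1) * (((M : ℕ) : ℝ) - 1) ^ (s + 1) ≤ c * T := by
        rw [hcdef]
        calc (2 : ℝ) ^ (s + 1) * (((M : ℕ) : ℝ) - 1) ^ (s + 1)
            = (2 : ℝ) ^ (s + 1) * ((s + 1) * ((((M : ℕ) : ℝ) - 1) ^ (s + 1) / (s + 1))) := by
              field_simp
          _ ≤ (2 : ℝ) ^ (s + 1) * ((s + 1) * T) := by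
              apply mul_le_mul_of_nonneg_left _ h2pos.le
              exact mul_le_mul_of_nonneg_left hTLB (by linarith)
          _ = (s + 1) * (2 : ℝ) ^ (s + 1) * T := by ring
      have hkey' : ((M : ℕ) : ℝ) ^ s * ((M : ℕ) : ℝ) ≤ c * T := by
        have e1 : ((M : ℕ) : ℝ) ^ s * ((M : ℕ) : ℝ) = ((M : ℕ) : ℝ) ^ (s + 1) := by
          rw [Real.rpow_add hMrpos, Real.rpow_one]
        have e2 : ((M : ℕ) : ℝ) ^ (s + 1) ≤ (2 * (((M : ℕ) : ℝ) - 1)) ^ (s + 1) :=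
          Real.rpow_le_rpow hMrpos.le (by linarith) (by linarith)
        have e3 : (2 * (((M : ℕ) : ℝ) - 1)) ^ (s + 1)
            = (2 : ℝ) ^ (s + 1) * (((M : ℕ) : ℝ) - 1) ^ (s + 1) :=
          Real.mul_rpow (by norm_num) (by linarith)
        rw [e1]
        rw [e3] at e2
        linarith
      have hkey : ((M : ℕ) : ℝ) ^ s / T ≤ c * (((M : ℕ) : ℝ))⁻¹ := by
        rw [div_le_iff₀ hTpos]
        have hstep := mul_le_mul_of_nonneg_right hkey' (inv_nonneg.mpr hMrpos.le)
        calc ((M : ℕ) : ℝ) ^ s = ((M : ℕ) : ℝ) ^ s * ((M : ℕ) : ℝ) * (((M : ℕ) : ℝ))⁻¹ := by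
              field_simp
          _ ≤ c * T * (((M : ℕ) : ℝ))⁻¹ := hstep
          _ = c * (((M : ℕ) : ℝ))⁻¹ * T := by ring
      linarith
    set P : ℕ → ℝ := fun N => ∏ n ∈ Finset.Icc 1 N, (ellSeq s n)⁻¹ with hPdef
    have hPnonneg : ∀ N, 0 ≤ P N := by
      intro N
      apply Finset.prod_nonneg
      intro i hi
      exact inv_nonneg.mpr (hellpos i (Finset.mem_Icc.mp hi).1).le
    have hmono : Monotone P := by
      apply monotone_nat_of_le_succ
      intro N
      have : P (N + 1) = P N * (ellSeq s (N + 1))⁻¹ := by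
        rw [hPdef]
        exact Finset.prod_Icc_succ_top (by omega) _
      rw [this]
      nth_rewrite 1 [← mul_one (P N)]
      exact mul_le_mul_of_nonneg_left (hone (N + 1) (by omega)) (hPnonneg N)
    have hbdd : ∀ N, P N ≤ Real.exp (2 * c) := by
      intro N
      have step1 : P N ≤ ∏ n ∈ Finset.Icc 1 N, Real.exp (c * (1 / 2 : ℝ) ^ n) := by
        apply Finset.prod_le_prod
        · intro i hi
          exact inv_nonneg.mpr (hellpos i (Finset.mem_Icc.mp hi).1).le
        · intro i hi
          refine le_trans (hfac i (Finset.mem_Icc.mp hi).1) ?_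
          have := Real.add_one_le_exp (c * (1 / 2 : ℝ) ^ i)
          linarith
      have step2 : (∏ n ∈ Finset.Icc 1 N, Real.exp (c * (1 / 2 : ℝ) ^ n))
          = Real.exp (∑ n ∈ Finset.Icc 1 N, c * (1 / 2 : ℝ) ^ n) :=
        (Real.exp_sum _ _).symm
      have step3 : (∑ n ∈ Finset.Icc 1 N, c * (1 / 2 : ℝ) ^ n) ≤ 2 * c := by
        rw [← Finset.mul_sum]
        have hsub : Finset.Icc 1 N ⊆ Finset.range (N + 1) := by
          intro x hx
          rw [Finset.mem_range]
          have := (Finset.mem_Icc.mp hx).2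
          omega
        have h1 : (∑ n ∈ Finset.Icc 1 N, (1 / 2 : ℝ) ^ n)
            ≤ ∑ n ∈ Finset.range (N + 1), (1 / 2 : ℝ) ^ n := by
          apply Finset.sum_le_sum_of_subset_of_nonneg hsub
          intro i _ _
          positivity
        have h2 := sum_geometric_two_le (N + 1)
        nlinarith [mul_le_mul_of_nonneg_left (le_trans h1 h2) hc]
      calc P N ≤ _ := step1
        _ = _ := step2
        _ ≤ Real.exp (2 * c) := Real.exp_le_exp.mpr step3
    refine ⟨⨆ N, P N, tendsto_atTop_ciSup hmono ⟨Real.exp (2 * c), ?_⟩⟩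
    rintro x ⟨N, rfl⟩
    exact hbdd N
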